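/- Let X_1, …, X_m be mutually orthogonal subspaces of ℝ^n, each of dimension r ≥ 1, and for each i let {ξ_{i,j}}_{j=1}^r be an orthonormal basis of X_i. Let A ∈ ℝ^{m₁×m}, B ∈ ℝ^{m₂×m} with 1 ≤ m₁ < m satisfy: the rows of A form an orthonormal set in ℝ^m, every row of B is orthogonal to every row of A, and BᵀB = I_m − AᵀA. For 1 ≤ j ≤ r let Ξ^{(j)} ∈ ℝ^{m×n} be the matrix whose i-th row is ξ_{i,j}, and define Aᶜ ∈ ℝ^{m₁r×n} by stacking the matrices AΞ^{(1)}, …, AΞ^{(r)} and Bᶜ ∈ ℝ^{m₂r×n} by stacking BΞ^{(1)}, …, BΞ^{(r)}. Let V be the row span of Aᶜ and W the row span of Bᶜ. Then X_1 ⊕ ⋯ ⊕ X_m = V ⊕ W with V orthogonal to W, the rows of Aᶜ form an orthonormal basis of V (so dim V = m₁r), and the rows of Bᶜ form a tight frame for W. -/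

import Mathlib

open Matrix

/-- The stacked matrix `CONCAT(M Ξ^{(1)}, …, M Ξ^{(r)})`, whose block `j` is the matrix
`M * Ξ^{(j)}` where `Ξ^{(j)}` has `i`-th row `ξ i j`. Row `(j, i)` is row `i` of `M Ξ^{(j)}`. -/
noncomputable def stackedFilter {m₀ m n r : ℕ} (M : Matrix (Fin m₀) (Fin m) ℝ)
    (ξ : Fin m → Fin r → Fin n → ℝ) : Matrix (Fin r × Fin m₀) (Fin n) ℝ :=
  fun p => (M * Matrix.of fun i => ξ i p.1) p.2

theorem sum_dotProduct' {ι n : Type*} [Fintype ι] [Fintype n] (f : ι → n → ℝ) (w : n → ℝ) :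
    (∑ i, f i) ⬝ᵥ w = ∑ i, f i ⬝ᵥ w := by
  simp only [dotProduct, Finset.sum_apply, Finset.sum_mul]
  exact Finset.sum_comm

theorem dotProduct_sum' {ι n : Type*} [Fintype ι] [Fintype n] (w : n → ℝ) (f : ι → n → ℝ) :
    w ⬝ᵥ (∑ i, f i) = ∑ i, w ⬝ᵥ f i := by
  rw [dotProduct_comm, sum_dotProduct']
  simp [dotProduct_comm]

/-- quadratic form expansion: `∑ b, (∑ i, M b i * x i)^2 = ∑ i i', (MᵀM) i i' * (x i * x i')`. -/
theorem sq_sum_expand {k m : ℕ} (M : Matrix (Fin k) (Fin m) ℝ) (x : Fin m → ℝ) :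
    ∑ b, (∑ i, M b i * x i) ^ 2 = ∑ i, ∑ i', (Mᵀ * M) i i' * (x i * x i') := by
  simp_rw [sq, Finset.sum_mul_sum, Matrix.mul_apply, Matrix.transpose_apply, Finset.sum_mul]
  rw [Finset.sum_comm]
  refine Finset.sum_congr rfl fun i _ => ?_
  rw [Finset.sum_comm]
  exact Finset.sum_congr rfl fun i' _ => Finset.sum_congr rfl fun b _ => by ring

/-- (Lemma 3 of the paper: correctness of the decomposition DEC.) Given mutually
orthogonal `r`-dimensional subspaces `X_1, …, X_m` of `ℝ^n` with orthonormal bases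
`{ξ_{i,j}}_j`, and filters `A`, `B` with orthonormal rows of `A`, rows of `B` orthogonal
to rows of `A`, and `BᵀB = I − AᵀA`, the stacked matrices `Aᶜ`, `Bᶜ` give an orthogonal
decomposition `⊕ᵢ Xᵢ = V ⊕ W`, the rows of `Aᶜ` form an orthonormal basis of `V`
(so `dim V = m₁ r`), and the rows of `Bᶜ` form a tight frame for `W`. -/
theorem dec_correctness {n m m₁ m₂ r : ℕ}
    (hr : 1 ≤ r) (hm₁ : 1 ≤ m₁) (hm : m₁ < m)
    (X : Fin m → Submodule ℝ (Fin n → ℝ))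
    (hXorth : ∀ i i' : Fin m, i ≠ i' → ∀ x ∈ X i, ∀ y ∈ X i', x ⬝ᵥ y = 0)
    (hXdim : ∀ i, Module.finrank ℝ (X i) = r)
    (ξ : Fin m → Fin r → Fin n → ℝ)
    (hξON : ∀ (i : Fin m) (j j' : Fin r), ξ i j ⬝ᵥ ξ i j' = if j = j' then 1 else 0)
    (hξspan : ∀ i, Submodule.span ℝ (Set.range (ξ i)) = X i)
    (A : Matrix (Fin m₁) (Fin m) ℝ) (B : Matrix (Fin m₂) (Fin m) ℝ)
    (hA : ∀ i j : Fin m₁, A i ⬝ᵥ A j = if i = j then 1 else 0)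
    (hAB : ∀ (i : Fin m₂) (j : Fin m₁), B i ⬝ᵥ A j = 0)
    (hB : Bᵀ * B = 1 - Aᵀ * A) :
    ((⨆ i, X i) =
       Submodule.span ℝ (Set.range (stackedFilter A ξ)) ⊔
         Submodule.span ℝ (Set.range (stackedFilter B ξ))) ∧
    (Submodule.span ℝ (Set.range (stackedFilter A ξ)) ⊓
       Submodule.span ℝ (Set.range (stackedFilter B ξ)) = ⊥) ∧
    (∀ v ∈ Submodule.span ℝ (Set.range (stackedFilter A ξ)),
       ∀ w ∈ Submodule.span ℝ (Set.range (stackedFilter B ξ)), v ⬝ᵥ w = 0) ∧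
    (∀ p q : Fin r × Fin m₁,
       stackedFilter A ξ p ⬝ᵥ stackedFilter A ξ q = if p = q then 1 else 0) ∧
    (Module.finrank ℝ (Submodule.span ℝ (Set.range (stackedFilter A ξ))) = m₁ * r) ∧
    (∀ f ∈ Submodule.span ℝ (Set.range (stackedFilter B ξ)),
       f ⬝ᵥ f = ∑ p : Fin r × Fin m₂, (f ⬝ᵥ stackedFilter B ξ p) ^ 2) := by
  set V := Submodule.span ℝ (Set.range (stackedFilter A ξ)) with hV
  set W := Submodule.span ℝ (Set.range (stackedFilter B ξ)) with hW
  -- membership of ξ i j in X i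
  have hmem : ∀ i j, ξ i j ∈ X i := fun i j => (hξspan i) ▸ Submodule.subset_span ⟨j, rfl⟩
  -- global orthonormality
  have hON : ∀ (i i' : Fin m) (j j' : Fin r),
      ξ i j ⬝ᵥ ξ i' j' = if i = i' ∧ j = j' then 1 else 0 := by
    intro i i' j j'
    by_cases h : i = i'
    · subst h; rw [hξON]; simp
    · rw [if_neg (by tauto)]; exact hXorth i i' h _ (hmem i j) _ (hmem i' j')
  -- stacked filter rows as linear combinations
  have sf_apply : ∀ {m₀ : ℕ} (M : Matrix (Fin m₀) (Fin m) ℝ) (p : Fin r × Fin m₀),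
      stackedFilter M ξ p = ∑ i, M p.2 i • ξ i p.1 := by
    intro m₀ M p; funext q
    simp [stackedFilter, Matrix.mul_apply, Finset.sum_apply]
  -- dot products of stacked filter rows
  have sf_dot_sf : ∀ {k l : ℕ} (M : Matrix (Fin k) (Fin m) ℝ) (N : Matrix (Fin l) (Fin m) ℝ)
      (p : Fin r × Fin k) (q : Fin r × Fin l),
      stackedFilter M ξ p ⬝ᵥ stackedFilter N ξ q =
        if p.1 = q.1 then M p.2 ⬝ᵥ N q.2 else 0 := by
    intro k l M N p q
    rw [sf_apply, sf_apply, sum_dotProduct']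
    simp only [smul_dotProduct, dotProduct_sum', dotProduct_smul, hON, smul_eq_mul,
      mul_ite, mul_one, mul_zero]
    by_cases h : p.1 = q.1
    · simp only [h, and_true, Finset.sum_ite_eq, Finset.mem_univ, if_true]
      simp [dotProduct]
    · simp [h]
  -- dot product with an arbitrary vector
  have dot_sf : ∀ {k : ℕ} (M : Matrix (Fin k) (Fin m) ℝ) (f : Fin n → ℝ) (p : Fin r × Fin k),
      f ⬝ᵥ stackedFilter M ξ p = ∑ i, M p.2 i * (f ⬝ᵥ ξ i p.1) := by
    intro k M f p
    rw [sf_apply, dotProduct_sum']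
    simp [dotProduct_smul]
  -- orthonormality of rows of Aᶜ
  have hAON : ∀ p q : Fin r × Fin m₁,
      stackedFilter A ξ p ⬝ᵥ stackedFilter A ξ q = if p = q then 1 else 0 := by
    intro p q
    rw [sf_dot_sf, hA]
    by_cases h1 : p.1 = q.1 <;> by_cases h2 : p.2 = q.2 <;> simp [h1, h2, Prod.ext_iff]
  -- orthogonality of V and W
  have h_orth : ∀ v ∈ V, ∀ w ∈ W, v ⬝ᵥ w = 0 := by
    intro v hv
    induction hv using Submodule.span_induction with
    | mem x hx =>
      obtain ⟨p, rfl⟩ := hx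
      intro w hw
      induction hw using Submodule.span_induction with
      | mem y hy =>
        obtain ⟨q, rfl⟩ := hy
        rw [sf_dot_sf]
        have : A p.2 ⬝ᵥ B q.2 = 0 := by rw [dotProduct_comm]; exact hAB q.2 p.2
        simp [this]
      | zero => simp
      | add y z _ _ hy hz => rw [dotProduct_add, hy, hz, add_zero]
      | smul a y _ hy => rw [dotProduct_smul, hy, smul_zero]
    | zero => intro w hw; simp
    | add x y _ _ hx hy => intro w hw; rw [add_dotProduct, hx w hw, hy w hw, add_zero]
    | smul a x _ hx => intro w hw; rw [smul_dotProduct, hx w hw, smul_zero]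
  -- rows of stacked filters lie in the span of the ξ's
  have hT : (⨆ i, X i) =
      Submodule.span ℝ (Set.range fun p : Fin m × Fin r => ξ p.1 p.2) := by
    calc (⨆ i, X i) = ⨆ i, Submodule.span ℝ (Set.range (ξ i)) := by simp_rw [hξspan]
      _ = Submodule.span ℝ (⋃ i, Set.range (ξ i)) := (Submodule.span_iUnion _).symm
      _ = Submodule.span ℝ (Set.range fun p : Fin m × Fin r => ξ p.1 p.2) := by
          congr 1
          ext x
          simp only [Set.mem_iUnion, Set.mem_range, Prod.exists]
  have hABsum : Aᵀ * A + Bᵀ * B = 1 := by rw [hB]; abel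
  -- reconstruction of ξ from the stacked filters
  have key : ∀ (i : Fin m) (j : Fin r),
      ξ i j = (∑ a, A a i • stackedFilter A ξ (j, a)) + ∑ b, B b i • stackedFilter B ξ (j, b) := by
    intro i j
    have swap : ∀ {k : ℕ} (M : Matrix (Fin k) (Fin m) ℝ) (x : Fin m → ℝ),
        ∑ a, M a i * ∑ i', M a i' * x i' = ∑ i', (Mᵀ * M) i i' * x i' := by
      intro k M x
      simp_rw [Finset.mul_sum, Matrix.mul_apply, Matrix.transpose_apply, Finset.sum_mul]
      rw [Finset.sum_comm]
      exact Finset.sum_congr rfl fun i' _ => Finset.sum_congr rfl fun a _ => by ring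
    funext q
    have hq : ((∑ a, A a i • stackedFilter A ξ (j, a))
        + ∑ b, B b i • stackedFilter B ξ (j, b)) q
        = (∑ a, A a i * ∑ i', A a i' * ξ i' j q)
        + ∑ b, B b i * ∑ i', B b i' * ξ i' j q := by
      simp [sf_apply, Finset.sum_apply, Finset.mul_sum]
    rw [hq, swap A, swap B, ← Finset.sum_add_distrib]
    simp_rw [← add_mul, ← Matrix.add_apply, hABsum, Matrix.one_apply, ite_mul, one_mul, zero_mul]
    simp
  -- span equality
  have hVW_eq : (⨆ i, X i) = V ⊔ W := by
    rw [hT]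
    apply le_antisymm
    · apply Submodule.span_le.2
      rintro _ ⟨p, rfl⟩
      show ξ p.1 p.2 ∈ V ⊔ W
      rw [key p.1 p.2]
      exact Submodule.add_mem _
        (Submodule.sum_mem _ fun a _ => Submodule.mem_sup_left
          (Submodule.smul_mem _ _ (Submodule.subset_span ⟨(p.2, a), rfl⟩)))
        (Submodule.sum_mem _ fun b _ => Submodule.mem_sup_right
          (Submodule.smul_mem _ _ (Submodule.subset_span ⟨(p.2, b), rfl⟩)))
    · apply sup_le <;> apply Submodule.span_le.2 <;> rintro _ ⟨p, rfl⟩ <;>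
        rw [sf_apply] <;>
        exact Submodule.sum_mem _ fun i _ =>
          Submodule.smul_mem _ _ (Submodule.subset_span ⟨(i, p.1), rfl⟩)
  refine ⟨hVW_eq, ?_, h_orth, hAON, ?_, ?_⟩
  · -- trivial intersection
    rw [Submodule.eq_bot_iff]
    rintro x ⟨hxV, hxW⟩
    exact dotProduct_self_eq_zero.mp (h_orth x hxV x hxW)
  · -- finrank
    have hli : LinearIndependent ℝ (stackedFilter A ξ) := by
      refine Fintype.linearIndependent_iff.mpr ?_
      intro g hg q
      have h := congrArg (fun v => v ⬝ᵥ stackedFilter A ξ q) hg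
      simp only [sum_dotProduct', smul_dotProduct, hAON, smul_eq_mul, mul_ite, mul_one,
        mul_zero, Finset.sum_ite_eq', Finset.mem_univ, if_true, zero_dotProduct] at h
      exact h
    rw [finrank_span_eq_card hli]
    simp [mul_comm]
  · -- tight frame
    intro f hf
    have hfT : f ∈ Submodule.span ℝ (Set.range fun p : Fin m × Fin r => ξ p.1 p.2) := by
      rw [← hT, hVW_eq]
      exact Submodule.mem_sup_right hf
    obtain ⟨c, hc⟩ := Submodule.mem_span_range_iff_exists_fun ℝ |>.mp hfT
    have hfdot : ∀ (i : Fin m) (j : Fin r), f ⬝ᵥ ξ i j = c (i, j) := by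
      intro i j
      rw [← hc, sum_dotProduct']
      have hiff : ∀ p : Fin m × Fin r, (p.1 = i ∧ p.2 = j) ↔ p = (i, j) := by
        intro p; constructor
        · rintro ⟨h1, h2⟩; exact Prod.ext h1 h2
        · rintro rfl; exact ⟨rfl, rfl⟩
      simp only [smul_dotProduct, hON, hiff, smul_eq_mul, mul_ite, mul_one, mul_zero,
        Finset.sum_ite_eq', Finset.mem_univ, if_true]
    have hff : f ⬝ᵥ f = ∑ p : Fin m × Fin r, c p ^ 2 := by
      nth_rewrite 1 [← hc]
      rw [sum_dotProduct']
      refine Finset.sum_congr rfl fun p _ => ?_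
      show (c p • ξ p.1 p.2) ⬝ᵥ f = c p ^ 2
      rw [smul_dotProduct, dotProduct_comm, hfdot p.1 p.2, smul_eq_mul, ← sq]
    have hfA : ∀ (j : Fin r) (a : Fin m₁), ∑ i, A a i * c (i, j) = 0 := by
      intro j a
      have h0 : f ⬝ᵥ stackedFilter A ξ (j, a) = 0 := by
        rw [dotProduct_comm]
        exact h_orth _ (Submodule.subset_span ⟨(j, a), rfl⟩) f hf
      rw [dot_sf] at h0
      simpa [hfdot] using h0
    -- per block-j computation
    have hblock : ∀ j : Fin r, ∑ b, (∑ i, B b i * c (i, j)) ^ 2 = ∑ i, c (i, j) ^ 2 := by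
      intro j
      rw [sq_sum_expand, hB]
      have : ∑ i, ∑ i', ((1 - Aᵀ * A : Matrix (Fin m) (Fin m) ℝ)) i i' * (c (i, j) * c (i', j))
          = ∑ i, c (i, j) ^ 2 - ∑ i, ∑ i', (Aᵀ * A) i i' * (c (i, j) * c (i', j)) := by
        simp_rw [Matrix.sub_apply, sub_mul, Finset.sum_sub_distrib, Matrix.one_apply,
          ite_mul, one_mul, zero_mul, Finset.sum_ite_eq, Finset.mem_univ, if_true, ← sq]
      rw [this, ← sq_sum_expand A fun i => c (i, j)]
      simp [hfA j]
    calc f ⬝ᵥ f = ∑ p : Fin m × Fin r, c p ^ 2 := hff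
      _ = ∑ i, ∑ j, c (i, j) ^ 2 := Fintype.sum_prod_type _
      _ = ∑ j, ∑ i, c (i, j) ^ 2 := Finset.sum_comm
      _ = ∑ j, ∑ b, (∑ i, B b i * c (i, j)) ^ 2 := by simp_rw [hblock]
      _ = ∑ p : Fin r × Fin m₂, (f ⬝ᵥ stackedFilter B ξ p) ^ 2 := by
          rw [Fintype.sum_prod_type]
          exact Finset.sum_congr rfl fun j _ => Finset.sum_congr rfl fun b _ => by
            rw [dot_sf]; simp [hfdot]
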